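/- Let p be a prime, s and l positive integers, and n a nonnegative integer with ñ = ⌊n/p⌋. Then H({s}^l;n) = Σ_{k=0}^{l} p^{-ks} · H({s}^k; ñ) · H*({s}^{l-k}; n), where by convention H({s}^0;m) = H*({s}^0;m) = 1 for every m. -/

import Mathlib

lemma tupleSum (L n : ℕ) (P : ℕ → Prop) [DecidablePred P] (f : ℕ → ℚ) :
    ∑ k ∈ Finset.univ.filter
        (fun k : Fin L → Fin (n + 1) => StrictMono k ∧ ∀ i, P (k i : ℕ)),
      ∏ i, f (k i : ℕ)
    = ∑ S ∈ ((Finset.range (n + 1)).filter P).powersetCard L, ∏ m ∈ S, f m := by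
  classical
  refine Finset.sum_bij (fun k _ => Finset.image (fun i => ((k i : ℕ))) Finset.univ)
    ?_ ?_ ?_ ?_
  · rintro k hk
    simp only [Finset.mem_filter, Finset.mem_univ, true_and] at hk
    obtain ⟨hmono, hP⟩ := hk
    have hinj : Function.Injective (fun i => ((k i : ℕ))) := by
      intro a b hab
      exact hmono.injective (Fin.val_injective hab)
    rw [Finset.mem_powersetCard]
    constructor
    · intro x hx
      simp only [Finset.mem_image, Finset.mem_univ, true_and] at hx
      obtain ⟨i, rfl⟩ := hx
      simp only [Finset.mem_filter, Finset.mem_range]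
      exact ⟨(k i).isLt, hP i⟩
    · rw [Finset.card_image_of_injective _ hinj, Finset.card_univ, Fintype.card_fin]
  · rintro k hk k' hk' h
    simp only [Finset.mem_filter, Finset.mem_univ, true_and] at hk hk'
    set S := Finset.image (fun i => ((k i : ℕ))) Finset.univ with hS
    have hcard : S.card = L := by
      rw [hS, Finset.card_image_of_injective _
        (fun a b hab => hk.1.injective (Fin.val_injective hab)),
        Finset.card_univ, Fintype.card_fin]
    have hm1 : StrictMono (fun i => ((k i : ℕ))) := fun a b hab => hk.1 hab
    have hm2 : StrictMono (fun i => ((k' i : ℕ))) := fun a b hab => hk'.1 hab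
    have e1 : (fun i => ((k i : ℕ))) = S.orderEmbOfFin hcard :=
      Finset.orderEmbOfFin_unique hcard
        (fun x => by simp [hS]) hm1
    have e2 : (fun i => ((k' i : ℕ))) = S.orderEmbOfFin hcard :=
      Finset.orderEmbOfFin_unique hcard
        (fun x => by rw [h]; simp) hm2
    funext i
    exact Fin.val_injective (by rw [show ((k i : ℕ)) = _ from congrFun e1 i,
      show ((k' i : ℕ)) = _ from congrFun e2 i])
  · rintro S hS
    rw [Finset.mem_powersetCard] at hS
    obtain ⟨hsub, hcard⟩ := hS
    have hlt : ∀ i : Fin L, S.orderEmbOfFin hcard i < n + 1 := by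
      intro i
      have := hsub (Finset.orderEmbOfFin_mem S hcard i)
      simp only [Finset.mem_filter, Finset.mem_range] at this
      exact this.1
    refine ⟨fun i => ⟨S.orderEmbOfFin hcard i, hlt i⟩, ?_, ?_⟩
    · simp only [Finset.mem_filter, Finset.mem_univ, true_and]
      constructor
      · intro a b hab
        exact (S.orderEmbOfFin hcard).strictMono hab
      · intro i
        have := hsub (Finset.orderEmbOfFin_mem S hcard i)
        simp only [Finset.mem_filter, Finset.mem_range] at this
        exact this.2
    · ext x
      simp only [Finset.mem_image, Finset.mem_univ, true_and]
      constructor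
      · rintro ⟨i, rfl⟩
        exact Finset.orderEmbOfFin_mem S hcard i
      · intro hx
        have : x ∈ Set.range (S.orderEmbOfFin hcard) := by
          rw [Finset.range_orderEmbOfFin]; exact hx
        obtain ⟨i, hi⟩ := this
        exact ⟨i, hi⟩
  · rintro k hk
    simp only [Finset.mem_filter, Finset.mem_univ, true_and] at hk
    rw [Finset.prod_image]
    intro a _ b _ hab
    exact hk.1.injective (Fin.val_injective hab)

lemma splitSum (A B : Finset ℕ) (hd : Disjoint A B) (f : ℕ → ℚ) (l : ℕ) :
    ∑ S ∈ (A ∪ B).powersetCard l, ∏ m ∈ S, f m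
    = ∑ k ∈ Finset.range (l + 1),
        (∑ S₁ ∈ A.powersetCard k, ∏ m ∈ S₁, f m) *
        (∑ S₂ ∈ B.powersetCard (l - k), ∏ m ∈ S₂, f m) := by
  classical
  have hrhs : ∀ k, (∑ S₁ ∈ A.powersetCard k, ∏ m ∈ S₁, f m) *
        (∑ S₂ ∈ B.powersetCard (l - k), ∏ m ∈ S₂, f m)
      = ∑ q ∈ A.powersetCard k ×ˢ B.powersetCard (l - k),
          (∏ m ∈ q.1, f m) * ∏ m ∈ q.2, f m := by
    intro k
    rw [Finset.sum_mul_sum, Finset.sum_product]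
  simp only [hrhs]
  rw [← Finset.sum_biUnion]
  · refine Finset.sum_nbij' (fun S => (S ∩ A, S ∩ B)) (fun q => q.1 ∪ q.2) ?_ ?_ ?_ ?_ ?_
    · intro S hS
      rw [Finset.mem_powersetCard] at hS
      obtain ⟨hsub, hcard⟩ := hS
      have hU : (S ∩ A) ∪ (S ∩ B) = S := by
        rw [← Finset.inter_union_distrib_left]
        exact Finset.inter_eq_left.mpr hsub
      have hdisj : Disjoint (S ∩ A) (S ∩ B) :=
        hd.mono (Finset.inter_subset_right) (Finset.inter_subset_right)
      have hcA : (S ∩ A).card ≤ l := by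
        calc (S ∩ A).card ≤ S.card := Finset.card_le_card Finset.inter_subset_left
        _ = l := hcard
      simp only [Finset.mem_biUnion, Finset.mem_range]
      refine ⟨(S ∩ A).card, Nat.lt_succ_of_le hcA, ?_⟩
      rw [Finset.mem_product]
      dsimp only
      constructor
      · rw [Finset.mem_powersetCard]; exact ⟨Finset.inter_subset_right, rfl⟩
      · rw [Finset.mem_powersetCard]
        refine ⟨Finset.inter_subset_right, ?_⟩
        have := Finset.card_union_of_disjoint hdisj
        rw [hU, hcard] at this
        omega
    · intro q hq
      simp only [Finset.mem_biUnion, Finset.mem_range, Finset.mem_product,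
        Finset.mem_powersetCard] at hq
      obtain ⟨k, hk, ⟨hA1, hA2⟩, hB1, hB2⟩ := hq
      rw [Finset.mem_powersetCard]
      constructor
      · exact Finset.union_subset_union hA1 hB1
      · rw [Finset.card_union_of_disjoint (hd.mono hA1 hB1), hA2, hB2]
        omega
    · intro S hS
      rw [Finset.mem_powersetCard] at hS
      dsimp only
      rw [← Finset.inter_union_distrib_left]
      exact Finset.inter_eq_left.mpr hS.1
    · intro q hq
      simp only [Finset.mem_biUnion, Finset.mem_range, Finset.mem_product,
        Finset.mem_powersetCard] at hq
      obtain ⟨k, hk, ⟨hA1, hA2⟩, hB1, hB2⟩ := hq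
      have e1 : (q.1 ∪ q.2) ∩ A = q.1 := by
        rw [Finset.union_inter_distrib_right, Finset.inter_eq_left.mpr hA1,
          Finset.disjoint_iff_inter_eq_empty.mp (hd.symm.mono hB1 le_rfl)]
        exact Finset.union_empty _
      have e2 : (q.1 ∪ q.2) ∩ B = q.2 := by
        rw [Finset.union_inter_distrib_right, Finset.inter_eq_left.mpr hB1,
          Finset.disjoint_iff_inter_eq_empty.mp (hd.mono hA1 le_rfl)]
        exact Finset.empty_union _
      exact Prod.ext e1 e2
    · intro S hS
      rw [Finset.mem_powersetCard] at hS
      have hdisj : Disjoint (S ∩ A) (S ∩ B) :=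
        hd.mono (Finset.inter_subset_right) (Finset.inter_subset_right)
      have hU : (S ∩ A) ∪ (S ∩ B) = S := by
        rw [← Finset.inter_union_distrib_left]
        exact Finset.inter_eq_left.mpr hS.1
      rw [← Finset.prod_union hdisj, hU]
  · intro x hx y hy hxy
    apply Finset.disjoint_left.mpr
    intro q hq1 hq2
    simp only [Finset.mem_product, Finset.mem_powersetCard] at hq1 hq2
    exact hxy (by rw [← hq1.1.2, hq2.1.2])

lemma mulSum (p n k s : ℕ) (hp : 0 < p) :
    ∑ S ∈ ((Finset.range (n + 1)).filter (fun m => 1 ≤ m ∧ p ∣ m)).powersetCard k,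
      ∏ m ∈ S, (1 / (m : ℚ) ^ s)
    = (1 / (p : ℚ) ^ (k * s)) *
      ∑ S ∈ ((Finset.range (n / p + 1)).filter (fun m => 1 ≤ m)).powersetCard k,
        ∏ m ∈ S, (1 / (m : ℚ) ^ s) := by
  classical
  have hinj : Function.Injective (fun m => p * m) := fun a b h =>
    Nat.eq_of_mul_eq_mul_left hp h
  rw [Finset.mul_sum]
  refine (Finset.sum_bij (fun S _ => S.image (fun m => p * m)) ?_ ?_ ?_ ?_).symm
  · intro S hS
    rw [Finset.mem_powersetCard] at hS ⊢
    obtain ⟨hsub, hcard⟩ := hS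
    constructor
    · intro x hx
      simp only [Finset.mem_image] at hx
      obtain ⟨m, hm, rfl⟩ := hx
      have hmem := hsub hm
      simp only [Finset.mem_filter, Finset.mem_range] at hmem ⊢
      have hle : m ≤ n / p := Nat.lt_succ_iff.mp hmem.1
      have hmn : p * m ≤ n := by
        rw [mul_comm]
        exact (Nat.le_div_iff_mul_le hp).mp hle
      exact ⟨by omega, Nat.mul_pos hp hmem.2, ⟨m, rfl⟩⟩
    · rw [Finset.card_image_of_injective _ hinj, hcard]
  · intro S hS S' hS' h
    exact Finset.image_injective hinj h
  · intro S₁ hS₁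
    rw [Finset.mem_powersetCard] at hS₁
    obtain ⟨hsub, hcard⟩ := hS₁
    have hdvd : ∀ m ∈ S₁, p ∣ m := fun m hm => by
      have := hsub hm
      simp only [Finset.mem_filter, Finset.mem_range] at this
      exact this.2.2
    refine ⟨S₁.image (fun m => m / p), ?_, ?_⟩
    · rw [Finset.mem_powersetCard]
      constructor
      · intro x hx
        simp only [Finset.mem_image] at hx
        obtain ⟨m, hm, rfl⟩ := hx
        have hmem := hsub hm
        simp only [Finset.mem_filter, Finset.mem_range] at hmem ⊢
        obtain ⟨hlt, h1, hd⟩ := hmem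
        constructor
        · have : m / p ≤ n / p := Nat.div_le_div_right (by omega)
          omega
        · obtain ⟨c, rfl⟩ := hd
          have : 0 < c := Nat.pos_of_ne_zero (by rintro rfl; simp at h1)
          rw [Nat.mul_div_cancel_left c hp]
          omega
      · rw [Finset.card_image_of_injOn, hcard]
        intro a ha b hb hab
        obtain ⟨ca, rfl⟩ := hdvd a ha
        obtain ⟨cb, rfl⟩ := hdvd b hb
        dsimp only at hab
        rw [Nat.mul_div_cancel_left ca hp, Nat.mul_div_cancel_left cb hp] at hab
        rw [hab]
    · rw [Finset.image_image]
      have : ∀ m ∈ S₁, ((fun m => p * m) ∘ fun m => m / p) m = id m := by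
        intro m hm
        simp only [Function.comp_apply, id_eq]
        exact Nat.mul_div_cancel' (hdvd m hm)
      rw [Finset.image_congr fun m hm => this m hm, Finset.image_id]
  · intro S hS
    rw [Finset.mem_powersetCard] at hS
    obtain ⟨hsub, hcard⟩ := hS
    rw [Finset.prod_image (fun a _ b _ h => hinj h)]
    have : ∀ m ∈ S, (1 : ℚ) / ((p * m : ℕ) : ℚ) ^ s
        = (1 / (p : ℚ) ^ s) * (1 / (m : ℚ) ^ s) := by
      intro m hm
      push_cast
      rw [mul_pow]
      rw [one_div, one_div, one_div, mul_inv]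
    rw [Finset.prod_congr rfl this, Finset.prod_mul_distrib, Finset.prod_const, hcard]
    congr 1
    rw [div_pow, one_pow, ← pow_mul, mul_comm k s]

open Classical in
/-- Multiple harmonic sum `H(s₁,…,s_l; n) = ∑_{1 ≤ k₁ < ⋯ < k_l ≤ n} k₁^{-s₁} ⋯ k_l^{-s_l}`,
encoded via strictly increasing tuples of indices in `{1,…,n}` (an empty sum is `0`,
and `mhs [] n = 1`). -/
noncomputable def mhs (s : List ℕ) (n : ℕ) : ℚ :=
  ∑ k ∈ Finset.univ.filter
      (fun k : Fin s.length → Fin (n + 1) =>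
        StrictMono k ∧ ∀ i, 1 ≤ (k i : ℕ)),
    ∏ i, 1 / (((k i : ℕ) : ℚ) ^ s.get i)

open Classical in
/-- `p`-restricted multiple harmonic sum `H*(s; n)`: same sum with all indices
not divisible by `p`. -/
noncomputable def mhsStar (p : ℕ) (s : List ℕ) (n : ℕ) : ℚ :=
  ∑ k ∈ Finset.univ.filter
      (fun k : Fin s.length → Fin (n + 1) =>
        StrictMono k ∧ ∀ i, 1 ≤ (k i : ℕ) ∧ ¬ p ∣ (k i : ℕ)),
    ∏ i, 1 / (((k i : ℕ) : ℚ) ^ s.get i)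

lemma mhs_eq (l s n : ℕ) :
    mhs (List.replicate l s) n
      = ∑ S ∈ ((Finset.range (n + 1)).filter (fun m => 1 ≤ m)).powersetCard l,
          ∏ m ∈ S, (1 / (m : ℚ) ^ s) := by
  rw [mhs]
  simp only [List.get_eq_getElem, List.getElem_replicate]
  have h := tupleSum ((List.replicate l s).length) n (fun m => 1 ≤ m)
    (fun m => 1 / (m : ℚ) ^ s)
  beta_reduce at h
  rw [h, List.length_replicate]

lemma mhsStar_eq (p l s n : ℕ) :
    mhsStar p (List.replicate l s) n
      = ∑ S ∈ ((Finset.range (n + 1)).filter (fun m => 1 ≤ m ∧ ¬ p ∣ m)).powersetCard l,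
          ∏ m ∈ S, (1 / (m : ℚ) ^ s) := by
  rw [mhsStar]
  simp only [List.get_eq_getElem, List.getElem_replicate]
  have h := tupleSum ((List.replicate l s).length) n (fun m => 1 ≤ m ∧ ¬ p ∣ m)
    (fun m => 1 / (m : ℚ) ^ s)
  beta_reduce at h
  rw [h, List.length_replicate]

/-- `H({s}^l;n) = ∑_{k=0}^{l} p^{-ks} · H({s}^k; ⌊n/p⌋) · H*({s}^{l-k}; n)`. -/
theorem stmt4 (p s l n : ℕ) (hp : p.Prime) (hs : 0 < s) (hl : 0 < l) :
    mhs (List.replicate l s) n =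
      ∑ k ∈ Finset.range (l + 1),
        (1 / (p : ℚ) ^ (k * s)) * mhs (List.replicate k s) (n / p) *
          mhsStar p (List.replicate (l - k) s) n := by
  classical
  have hp0 : 0 < p := hp.pos
  have hsplit : (Finset.range (n + 1)).filter (fun m => 1 ≤ m)
      = (Finset.range (n + 1)).filter (fun m => 1 ≤ m ∧ p ∣ m)
        ∪ (Finset.range (n + 1)).filter (fun m => 1 ≤ m ∧ ¬ p ∣ m) := by
    rw [← Finset.filter_or]
    apply Finset.filter_congr
    intro m _
    tauto
  have hdisj : Disjoint ((Finset.range (n + 1)).filter (fun m => 1 ≤ m ∧ p ∣ m))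
      ((Finset.range (n + 1)).filter (fun m => 1 ≤ m ∧ ¬ p ∣ m)) := by
    apply Finset.disjoint_left.mpr
    intro m h1 h2
    simp only [Finset.mem_filter] at h1 h2
    exact h2.2.2 h1.2.2
  rw [mhs_eq, hsplit, splitSum _ _ hdisj]
  apply Finset.sum_congr rfl
  intro k hk
  rw [mulSum p n k s hp0, mhs_eq, mhsStar_eq]
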